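/- With λ > 1 and d ≥ 1, the rates ν_j = j!(λ−1)^{j−1} / ∏_{k=1}^{j} (k + (2d−k)λ) satisfy ν_j > 0 for all 1 ≤ j ≤ 2d, and Σ_{j=1}^{2d} C(2d, j) ν_j = 1. -/
import Mathlib

private lemma factIco (n j : ℕ) (hj : j ≤ n) :
    n.choose j * j.factorial = ∏ m ∈ Finset.Ico (n - j + 1) (n + 1), m := by
  have h0 : 0 < (n - j).factorial := Nat.factorial_pos _
  apply Nat.eq_of_mul_eq_mul_left h0
  have h1 : (∏ m ∈ Finset.Ico 1 (n - j + 1), m) * ∏ m ∈ Finset.Ico (n - j + 1) (n + 1), m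
      = ∏ m ∈ Finset.Ico 1 (n + 1), m :=
    Finset.prod_Ico_consecutive _ (by omega) (by omega)
  rw [Finset.prod_Ico_id_eq_factorial] at h1
  calc (n - j).factorial * (n.choose j * j.factorial)
      = n.choose j * j.factorial * (n - j).factorial := by ring
    _ = n.factorial := Nat.choose_mul_factorial_mul_factorial hj
    _ = (n - j).factorial * ∏ m ∈ Finset.Ico (n - j + 1) (n + 1), m := by
        rw [← Finset.prod_Ico_id_eq_factorial n]
        exact h1.symm

/-- The rates `ν_j = j!(λ−1)^{j−1} / ∏_{k=1}^{j} (k+(2d−k)λ)` are positive for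
`1 ≤ j ≤ 2d`, and `Σ_{j=1}^{2d} C(2d,j) ν_j = 1`. -/
theorem stmt_4 (d : ℕ) (hd : 1 ≤ d) (lam : ℝ) (hlam : 1 < lam)
    (ν : ℕ → ℝ)
    (hν : ∀ j, ν j = (Nat.factorial j : ℝ) * (lam - 1) ^ (j - 1) /
      ∏ k ∈ Finset.Icc 1 j, ((k : ℝ) + ((2 * d - k : ℕ) : ℝ) * lam)) :
    (∀ j, 1 ≤ j → j ≤ 2 * d → 0 < ν j) ∧
    ∑ j ∈ Finset.Icc 1 (2 * d), (Nat.choose (2 * d) j : ℝ) * ν j = 1 := by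
  set n := 2 * d with hn
  have hn1 : 1 ≤ n := by omega
  set μ := lam - 1 with hμdef
  have hμ : 0 < μ := by simp [hμdef]; linarith
  set P : ℕ → ℝ := fun j => ∏ m ∈ Finset.Ico (n - j) n, ((n : ℝ) + (m : ℝ) * μ) with hPdef
  set Q : ℕ → ℝ := fun j => ∏ m ∈ Finset.Ico (n - j) n, (μ * (m : ℝ)) with hQdef
  have hP : ∀ j, 0 < P j := by
    intro j
    apply Finset.prod_pos
    intro m _
    have : (0:ℝ) ≤ (m:ℝ) * μ := by positivity
    have : (0:ℝ) < (n:ℝ) := by exact_mod_cast hn1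
    linarith
  -- the denominator in the definition of ν equals P j
  have hDen : ∀ j, j ≤ n → (∏ k ∈ Finset.Icc 1 j, ((k : ℝ) + ((n - k : ℕ) : ℝ) * lam)) = P j := by
    intro j hj
    apply Finset.prod_nbij' (fun k => n - k) (fun m => n - m)
    · intro k hk
      simp only [Finset.mem_Icc] at hk
      simp only [Finset.mem_Ico]
      omega
    · intro m hm
      simp only [Finset.mem_Ico] at hm
      simp only [Finset.mem_Icc]
      omega
    · intro k hk
      simp only [Finset.mem_Icc] at hk
      omega
    · intro m hm
      simp only [Finset.mem_Ico] at hm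
      omega
    · intro k hk
      simp only [Finset.mem_Icc] at hk
      have hkn : k ≤ n := le_trans hk.2 hj
      rw [Nat.cast_sub hkn]
      ring
  -- positivity
  have hpos : ∀ j, 1 ≤ j → j ≤ n → 0 < ν j := by
    intro j h1 h2
    rw [hν j, hDen j h2]
    have h3 : (0:ℝ) < (Nat.factorial j : ℝ) := by exact_mod_cast Nat.factorial_pos j
    have := hP j
    positivity
  refine ⟨hpos, ?_⟩
  -- telescoping identity
  set G : ℕ → ℝ := fun j => Q j / P j with hGdef
  have hterm : ∀ j, 1 ≤ j → j ≤ n → (n.choose j : ℝ) * ν j = G (j - 1) - G j := by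
    intro j h1 h2
    have hsub : n - (j - 1) = n - j + 1 := by omega
    have hlt : n - j < n := by omega
    have hle : n - j + 1 ≤ n := by omega
    have hPstep : P j = ((n : ℝ) + ((n - j : ℕ) : ℝ) * μ) * P (j - 1) := by
      simp only [hPdef, hsub]
      exact Finset.prod_eq_prod_Ico_succ_bot hlt _
    have hQstep : Q j = (μ * ((n - j : ℕ) : ℝ)) * Q (j - 1) := by
      simp only [hQdef, hsub]
      exact Finset.prod_eq_prod_Ico_succ_bot hlt _
    have hQ' : Q (j - 1) = μ ^ (j - 1) * ∏ m ∈ Finset.Ico (n - j + 1) n, (m : ℝ) := by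
      simp only [hQdef, hsub, Finset.prod_mul_distrib, Finset.prod_const, Nat.card_Ico]
      congr 2
      omega
    have hCfact : (n.choose j : ℝ) * (Nat.factorial j : ℝ)
        = (∏ m ∈ Finset.Ico (n - j + 1) n, (m : ℝ)) * (n : ℝ) := by
      rw [← Finset.prod_Ico_succ_top hle, ← Nat.cast_prod]
      exact_mod_cast factIco n j h2
    have hc0 : ((n : ℝ) + ((n - j : ℕ) : ℝ) * μ) ≠ 0 := by
      have h3 : (0:ℝ) ≤ ((n - j : ℕ) : ℝ) * μ := by positivity
      have h4 : (0:ℝ) < (n:ℝ) := by exact_mod_cast hn1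
      nlinarith
    have hP0 : P (j - 1) ≠ 0 := ne_of_gt (hP _)
    have hnum : (n.choose j : ℝ) * (Nat.factorial j : ℝ) * μ ^ (j - 1)
        = (n : ℝ) * Q (j - 1) := by
      rw [hQ', hCfact]; ring
    have hGj : G j = μ * ((n - j : ℕ) : ℝ) * Q (j - 1)
        / (((n : ℝ) + ((n - j : ℕ) : ℝ) * μ) * P (j - 1)) := by
      simp only [hGdef]
      rw [hQstep, hPstep]
    have hGj1 : G (j - 1) = Q (j - 1) / P (j - 1) := rfl
    have hR : Q (j - 1) / P (j - 1) - μ * ((n - j : ℕ) : ℝ) * Q (j - 1)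
        / (((n : ℝ) + ((n - j : ℕ) : ℝ) * μ) * P (j - 1))
        = (n : ℝ) * Q (j - 1) / (((n : ℝ) + ((n - j : ℕ) : ℝ) * μ) * P (j - 1)) := by
      rw [div_sub_div _ _ hP0 (mul_ne_zero hc0 hP0),
        div_eq_div_iff (mul_ne_zero hP0 (mul_ne_zero hc0 hP0)) (mul_ne_zero hc0 hP0)]
      ring
    rw [hν j, hDen j h2, hGj, hGj1, hR, hPstep]
    rw [show (n.choose j : ℝ) * ((Nat.factorial j : ℝ) * μ ^ (j - 1)
        / (((n : ℝ) + ((n - j : ℕ) : ℝ) * μ) * P (j - 1)))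
        = ((n.choose j : ℝ) * (Nat.factorial j : ℝ) * μ ^ (j - 1))
        / (((n : ℝ) + ((n - j : ℕ) : ℝ) * μ) * P (j - 1)) from by ring, hnum]
  -- sum the telescope
  have hsum : ∑ j ∈ Finset.Icc 1 n, (n.choose j : ℝ) * ν j
      = ∑ j ∈ Finset.Icc 1 n, (G (j - 1) - G j) := by
    apply Finset.sum_congr rfl
    intro j hj
    simp only [Finset.mem_Icc] at hj
    exact hterm j hj.1 hj.2
  rw [hsum]
  have hIcc : Finset.Icc 1 n = Finset.Ico 1 (n + 1) := by rw [Finset.Ico_add_one_right_eq_Icc]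
  rw [hIcc, Finset.sum_Ico_eq_sum_range]
  have hEq : (∑ i ∈ Finset.range (n + 1 - 1), (G (1 + i - 1) - G (1 + i)))
      = ∑ i ∈ Finset.range n, (G i - G (i + 1)) := by
    apply Finset.sum_congr
    · norm_num
    · intro i _
      congr 1
      · congr 1; omega
      · congr 1; omega
  rw [hEq, Finset.sum_range_sub' G n]
  have hG0 : G 0 = 1 := by
    simp [hGdef, hPdef, hQdef]
  have hGn : G n = 0 := by
    have h0 : (0 : ℕ) ∈ Finset.Ico (n - n) n := by
      simp only [Finset.mem_Ico]
      omega
    have : Q n = 0 := Finset.prod_eq_zero h0 (by simp)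
    simp [hGdef, this]
  rw [hG0, hGn]
  ring
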